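/- Let a₁,…,a_m ∈ ℝⁿ, x ∉ {a₁,…,a_m}, φ(x) = Σᵢ ‖x - aᵢ‖, and F(x) = (Σᵢ aᵢ/‖x-aᵢ‖)/(Σᵢ 1/‖x-aᵢ‖). If F(x) ≠ x, then φ(F(x)) < φ(x). -/

import Mathlib

open scoped RealInnerProductSpace

theorem stmt_15 (n m : ℕ) (hm : 0 < m) (a : Fin m → EuclideanSpace ℝ (Fin n))
    (x : EuclideanSpace ℝ (Fin n)) (hx : x ∉ Set.range a)
    (F : EuclideanSpace ℝ (Fin n))
    (hF : F = (∑ i, ‖x - a i‖⁻¹)⁻¹ • ∑ i, ‖x - a i‖⁻¹ • a i)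
    (hne : F ≠ x) :
    ∑ i, ‖F - a i‖ < ∑ i, ‖x - a i‖ := by
  have : Nonempty (Fin m) := ⟨⟨0, hm⟩⟩
  set w : Fin m → ℝ := fun i => ‖x - a i‖⁻¹ with hw
  have hxa : ∀ i, x ≠ a i := fun i h => hx ⟨i, h.symm⟩
  have hbpos : ∀ i, 0 < ‖x - a i‖ := fun i =>
    norm_pos_iff.2 (sub_ne_zero.2 (hxa i))
  have hwpos : ∀ i, 0 < w i := fun i => inv_pos.2 (hbpos i)
  have hWpos : (0:ℝ) < ∑ i, w i :=
    Finset.sum_pos (fun i _ => hwpos i) Finset.univ_nonempty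
  have hWF : (∑ i, w i) • F = ∑ i, w i • a i := by
    rw [hF, smul_smul, mul_inv_cancel₀ hWpos.ne', one_smul]
  have hzero : ∑ i, w i • (F - a i) = 0 := by
    simp_rw [smul_sub]
    rw [Finset.sum_sub_distrib, ← Finset.sum_smul, hWF, sub_self]
  -- per-index expansion
  have key : ∀ i, w i * ‖x - a i‖ ^ 2
      = w i * ‖x - F‖ ^ 2 + 2 * (w i * (inner ℝ (x - F) (F - a i) : ℝ)) + w i * ‖F - a i‖ ^ 2 := by
    intro i
    have h := norm_add_sq_real (x - F) (F - a i)
    rw [sub_add_sub_cancel] at h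
    rw [h]; ring
  have hsum : ∑ i, w i * ‖x - a i‖ ^ 2
      = (∑ i, w i) * ‖x - F‖ ^ 2 + ∑ i, w i * ‖F - a i‖ ^ 2 := by
    rw [Finset.sum_congr rfl (fun i _ => key i), Finset.sum_add_distrib,
      Finset.sum_add_distrib, ← Finset.sum_mul, ← Finset.mul_sum]
    have : ∑ i, w i * (inner ℝ (x - F) (F - a i) : ℝ) = 0 := by
      simp_rw [← real_inner_smul_right]
      rw [← inner_sum, hzero, inner_zero_right]
    rw [this]; ring
  have hgx : ∑ i, w i * ‖x - a i‖ ^ 2 = ∑ i, ‖x - a i‖ := by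
    refine Finset.sum_congr rfl fun i _ => ?_
    simp only [hw]
    rw [sq, ← mul_assoc, inv_mul_cancel₀ (hbpos i).ne', one_mul]
  have hgF : ∑ i, w i * ‖F - a i‖ ^ 2 < ∑ i, ‖x - a i‖ := by
    rw [← hgx, hsum]
    have : 0 < (∑ i, w i) * ‖x - F‖ ^ 2 := by
      apply mul_pos hWpos
      exact pow_pos (norm_pos_iff.2 (sub_ne_zero.2 (Ne.symm hne))) 2
    linarith
  -- per-index AM-GM bound
  have hb : ∀ i, ‖F - a i‖ ≤ (w i * ‖F - a i‖ ^ 2 + ‖x - a i‖) / 2 := by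
    intro i
    have hβ := hbpos i
    have h1 : w i * ‖x - a i‖ = 1 := inv_mul_cancel₀ hβ.ne'
    nlinarith [sq_nonneg (‖F - a i‖ - ‖x - a i‖), hwpos i, sq_nonneg (‖F - a i‖)]
  calc ∑ i, ‖F - a i‖ ≤ ∑ i, (w i * ‖F - a i‖ ^ 2 + ‖x - a i‖) / 2 :=
        Finset.sum_le_sum fun i _ => hb i
    _ = ((∑ i, w i * ‖F - a i‖ ^ 2) + ∑ i, ‖x - a i‖) / 2 := by
        rw [← Finset.sum_div, Finset.sum_add_distrib]
    _ < ∑ i, ‖x - a i‖ := by linarith
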